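/- arXiv:1903.04633 — 2 statements merged into one kernel-verified Lean document; each statement's English description precedes it below -/
import Mathlib

section
/- Let n ≥ 1 and write points of ℂⁿ as (z₁, z̃) with z₁ ∈ ℂ and z̃ ∈ ℂ^{n−1}. Let ψ be a real-valued real-analytic function on a neighborhood of 0 in ℂⁿ with ψ(0) = 0, and suppose the real Fréchet derivative at 0 of the function z₁ ↦ ψ(z₁, 0) is nonzero. Then there exist ε > 0 and δ > 0 such that for every z̃ ∈ ℂ^{n−1} with ‖z̃‖ < δ and every function Φ : ℂ → ℂ that is holomorphic on the disc D = {z₁ : |z₁| < ε}, if Φ(z₁) = 0 for every z₁ ∈ D with ψ(z₁, z̃) = 0, then Φ vanishes identically on D. -/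
open Metric
open Set

/-- Vanishing principle: if `ψ` is real-valued and real analytic near `0 = (0, 0)` in
`ℂⁿ = ℂ × ℂ^{n-1}`, with `ψ(0) = 0` and `z₁ ↦ ψ(z₁, 0)` having nonzero real derivative
at `0`, then there are `ε, δ > 0` such that for every `z̃` with `‖z̃‖ < δ`, any function
holomorphic on the disc `{|z₁| < ε}` vanishing on the slice `{z₁ : ψ(z₁, z̃) = 0}`
vanishes identically on the disc. -/
theorem holomorphic_vanishing_on_hypersurface_slice
    {n : ℕ} (hn : 1 ≤ n)
    (W : Set (ℂ × (Fin (n - 1) → ℂ))) (hW : IsOpen W) (h0W : ((0 : ℂ), (0 : Fin (n - 1) → ℂ)) ∈ W)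
    (ψ : ℂ × (Fin (n - 1) → ℂ) → ℝ) (hψ : AnalyticOnNhd ℝ ψ W)
    (hψ0 : ψ (0, 0) = 0)
    (ψ' : ℂ →L[ℝ] ℝ) (hψ' : HasFDerivAt (fun z₁ : ℂ => ψ (z₁, 0)) ψ' 0) (hψ'ne : ψ' ≠ 0) :
    ∃ ε > (0 : ℝ), ∃ δ > (0 : ℝ),
      (∀ (z₁ : ℂ) (zt : Fin (n - 1) → ℂ), ‖z₁‖ < ε → ‖zt‖ < δ → (z₁, zt) ∈ W) ∧
      ∀ zt : Fin (n - 1) → ℂ, ‖zt‖ < δ →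
        ∀ Φ : ℂ → ℂ, AnalyticOnNhd ℂ Φ (ball (0 : ℂ) ε) →
          (∀ z₁ ∈ ball (0 : ℂ) ε, ψ (z₁, zt) = 0 → Φ z₁ = 0) →
          ∀ z₁ ∈ ball (0 : ℂ) ε, Φ z₁ = 0 := by
  classical
  -- choose a direction v with ψ' v > 0
  obtain ⟨v₀, hv₀⟩ : ∃ u : ℂ, ψ' u ≠ 0 := by
    by_contra h; push_neg at h
    exact hψ'ne (ContinuousLinearMap.ext fun u => by simp [h u])
  set v : ℂ := if 0 < ψ' v₀ then v₀ else -v₀ with hvdef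
  have hc : 0 < ψ' v := by
    rcases lt_trichotomy (ψ' v₀) 0 with h | h | h
    · simp only [hvdef, if_neg (not_lt.mpr h.le), map_neg]; linarith
    · exact absurd h hv₀
    · simpa [hvdef, if_pos h] using h
  have hvne : v ≠ 0 := by
    intro h; rw [h] at hc; simp at hc
  have hvpos : 0 < ‖v‖ := by
    simpa [norm_pos_iff] using hvne
  set c : ℝ := ψ' v with hcdef
  -- the full derivative
  set A : ℂ × (Fin (n - 1) → ℂ) → (ℂ × (Fin (n - 1) → ℂ) →L[ℝ] ℝ) := fderiv ℝ ψ with hAdef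
  have hAan : AnalyticOnNhd ℝ A W := hψ.fderiv
  have hψ00 : AnalyticAt ℝ ψ ((0:ℂ), (0 : Fin (n - 1) → ℂ)) := hψ _ h0W
  have hψ'eq : ψ' = (A (0, 0)).comp (ContinuousLinearMap.inl ℝ ℂ (Fin (n - 1) → ℂ)) := by
    apply hψ'.unique
    have h1 : HasFDerivAt ψ (A (0, 0)) ((0:ℂ), (0 : Fin (n - 1) → ℂ)) :=
      hψ00.differentiableAt.hasFDerivAt
    have h2 : HasFDerivAt (fun z₁ : ℂ => ((z₁, 0) : ℂ × (Fin (n - 1) → ℂ)))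
        (ContinuousLinearMap.inl ℝ ℂ (Fin (n - 1) → ℂ)) 0 :=
      (ContinuousLinearMap.inl ℝ ℂ (Fin (n - 1) → ℂ)).hasFDerivAt
    exact HasFDerivAt.comp (g := ψ)
      (f := fun z₁ : ℂ => ((z₁, 0) : ℂ × (Fin (n - 1) → ℂ))) 0 h1 h2
  have hA00 : A (0, 0) (v, 0) = c := by
    rw [hcdef, hψ'eq]; rfl
  -- find ρ with good properties on the closed ball of radius ρ
  have hWnhds : W ∈ nhds ((0:ℂ), (0 : Fin (n - 1) → ℂ)) := hW.mem_nhds h0W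
  have hhcont : ContinuousAt (fun p => A p (v, 0)) ((0:ℂ), (0 : Fin (n - 1) → ℂ)) := by
    exact (ContinuousLinearMap.apply ℝ ℝ ((v, 0) : ℂ × (Fin (n - 1) → ℂ))).continuous.continuousAt.comp
      ((hAan.continuousOn).continuousAt hWnhds)
  have hev : ∀ᶠ p in nhds ((0:ℂ), (0 : Fin (n - 1) → ℂ)), p ∈ W ∧ c/2 < A p (v, 0) := by
    have h2 : ∀ᶠ p in nhds ((0:ℂ), (0 : Fin (n - 1) → ℂ)), c/2 < A p (v, 0) := by
      have : Ioi (c/2) ∈ nhds (A ((0:ℂ), (0 : Fin (n - 1) → ℂ)) (v, 0)) := by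
        rw [hA00]; exact Ioi_mem_nhds (half_lt_self hc)
      exact hhcont this
    filter_upwards [hWnhds, h2] with p h1 h2 using ⟨h1, h2⟩
  rw [Metric.eventually_nhds_iff] at hev
  obtain ⟨ρ₀, hρ₀, hρ₀P⟩ := hev
  set ρ : ℝ := ρ₀ / 2 with hρdef
  have hρpos : 0 < ρ := by positivity
  have hρP : ∀ p : ℂ × (Fin (n - 1) → ℂ), ‖p.1‖ ≤ ρ → ‖p.2‖ ≤ ρ →
      p ∈ W ∧ c/2 < A p (v, 0) := by
    intro p h1 h2
    apply hρ₀P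
    rw [Prod.dist_eq]
    have e1 : dist p.1 0 = ‖p.1‖ := by simp [Complex.dist_eq]
    have e2 : dist p.2 0 = ‖p.2‖ := by simp [dist_eq_norm]
    rw [e1, e2]
    have : ρ < ρ₀ := by rw [hρdef]; linarith
    exact lt_of_le_of_lt (max_le h1 h2) this
  -- radius r in the t-direction
  set r : ℝ := ρ / (4 * ‖v‖) with hrdef
  have hrpos : 0 < r := div_pos hρpos (mul_pos (by norm_num) hvpos)
  -- smallness of ψ near the origin
  have hψsmall : ∀ᶠ p in nhds ((0:ℂ), (0 : Fin (n - 1) → ℂ)), |ψ p| < c/2 * r := by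
    have h := hψ00.continuousAt
    rw [ContinuousAt, hψ0] at h
    have : ball (0:ℝ) (c/2 * r) ∈ nhds (0:ℝ) := ball_mem_nhds _ (by positivity)
    filter_upwards [h this] with p hp
    simpa [Real.norm_eq_abs] using mem_ball_zero_iff.mp hp
  rw [Metric.eventually_nhds_iff] at hψsmall
  obtain ⟨ρ₁, hρ₁, hρ₁P⟩ := hψsmall
  set ρ₂ : ℝ := min (ρ₁ / 2) ρ with hρ₂def
  have hρ₂pos : 0 < ρ₂ := lt_min (by positivity) hρpos
  have hρ₂le : ρ₂ ≤ ρ := min_le_right _ _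
  have hρ₂P : ∀ p : ℂ × (Fin (n - 1) → ℂ), ‖p.1‖ ≤ ρ₂ → ‖p.2‖ ≤ ρ₂ →
      |ψ p| < c/2 * r := by
    intro p h1 h2
    apply hρ₁P
    rw [Prod.dist_eq]
    have e1 : dist p.1 0 = ‖p.1‖ := by simp [Complex.dist_eq]
    have e2 : dist p.2 0 = ‖p.2‖ := by simp [dist_eq_norm]
    rw [e1, e2]
    have : ρ₂ < ρ₁ := lt_of_le_of_lt (min_le_left _ _) (by linarith)
    exact lt_of_le_of_lt (max_le h1 h2) this
  set σ : ℝ := min r (ρ₂ / ‖v‖) with hσdef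
  have hσpos : 0 < σ := lt_min hrpos (div_pos hρ₂pos hvpos)
  have hσr : σ ≤ r := min_le_left _ _
  -- points on the little rectangle are inside radius ρ/2
  have habs : ∀ t s : ℝ, |t| ≤ r → |s| ≤ σ →
      ‖(((t:ℂ) + (s:ℂ)*Complex.I)*v)‖ ≤ ρ/2 := by
    intro t s ht hs
    have h1 : ‖((t:ℂ) + (s:ℂ)*Complex.I)‖ ≤ |t| + |s| := by
      calc ‖((t:ℂ) + (s:ℂ)*Complex.I)‖
          ≤ ‖(t:ℂ)‖ + ‖((s:ℂ)*Complex.I)‖ := norm_add_le _ _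
        _ = |t| + |s| := by simp
    calc ‖(((t:ℂ) + (s:ℂ)*Complex.I)*v)‖
        = ‖((t:ℂ) + (s:ℂ)*Complex.I)‖ * ‖v‖ := by simp
      _ ≤ (|t| + |s|) * ‖v‖ := by
          exact mul_le_mul_of_nonneg_right h1 (norm_nonneg v)
      _ ≤ (r + r) * ‖v‖ := by
          apply mul_le_mul_of_nonneg_right _ (norm_nonneg v)
          have := le_trans hs hσr; linarith
      _ = ρ/2 := by rw [hrdef]; field_simp [hvpos.ne'] <;> ring
  refine ⟨ρ, hρpos, ρ₂, hρ₂pos, ?_, ?_⟩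
  · intro z₁ zt h1 h2
    exact (hρP (z₁, zt) (le_of_lt h1) (le_of_lt (lt_of_lt_of_le h2 hρ₂le))).1
  intro zt hzt Φ hΦ hΦ0
  -- membership / derivative facts along the rectangle
  have hmem : ∀ t s : ℝ, |t| ≤ r → |s| ≤ σ →
      ((((t:ℂ) + (s:ℂ)*Complex.I)*v, zt) ∈ W ∧
        c/2 < A (((t:ℂ) + (s:ℂ)*Complex.I)*v, zt) (v, 0)) := by
    intro t s ht hs
    apply hρP
    · exact le_trans (habs t s ht hs) (by linarith)
    · exact le_of_lt (lt_of_lt_of_le hzt hρ₂le)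
  have hderiv : ∀ t s : ℝ, |t| ≤ r → |s| ≤ σ →
      HasDerivAt (fun t : ℝ => ψ (((t:ℂ) + (s:ℂ)*Complex.I)*v, zt))
        (A (((t:ℂ) + (s:ℂ)*Complex.I)*v, zt) (v, 0)) t := by
    intro t s ht hs
    have hp : HasFDerivAt ψ (A (((t:ℂ) + (s:ℂ)*Complex.I)*v, zt))
        ((((t:ℂ) + (s:ℂ)*Complex.I)*v, zt)) :=
      (hψ _ (hmem t s ht hs).1).differentiableAt.hasFDerivAt
    have h1 : HasDerivAt (fun t : ℝ => ((t:ℂ) + (s:ℂ)*Complex.I)*v) v t := by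
      have h0 : HasDerivAt (fun t : ℝ => (t:ℂ)) 1 t := by
        simpa using (hasDerivAt_id t).ofReal_comp
      simpa using (h0.add_const ((s:ℂ)*Complex.I)).mul_const v
    have h2 : HasDerivAt (fun t : ℝ => ((((t:ℂ) + (s:ℂ)*Complex.I)*v, zt) :
        ℂ × (Fin (n - 1) → ℂ))) (v, 0) t := h1.prodMk (hasDerivAt_const _ _)
    exact hp.comp_hasDerivAt t h2
  -- for each s in (0, σ] there is a zero of ψ(·, zt) on the segment
  have key : ∀ s : ℝ, s ∈ Ioo (0:ℝ) σ →
      ∃ t ∈ Icc (-r) r, ψ (((t:ℂ) + (s:ℂ)*Complex.I)*v, zt) = 0 := by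
    intro s hs
    have hsabs : |s| ≤ σ := by rw [abs_of_pos hs.1]; exact le_of_lt hs.2
    set u : ℝ → ℝ := fun t => ψ (((t:ℂ) + (s:ℂ)*Complex.I)*v, zt) with hudef
    have hud : ∀ t ∈ Icc (-r) r, HasDerivAt u
        (A (((t:ℂ) + (s:ℂ)*Complex.I)*v, zt) (v, 0)) t := by
      intro t ht
      exact hderiv t s (abs_le.mpr ⟨ht.1, ht.2⟩) hsabs
    have hcont : ContinuousOn u (Icc (-r) r) := fun t ht =>
      ((hud t ht).continuousAt).continuousWithinAt
    have hdiff : DifferentiableOn ℝ u (interior (Icc (-r) r)) := fun t ht =>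
      ((hud t (interior_subset ht)).differentiableAt).differentiableWithinAt
    have hdge : ∀ t ∈ interior (Icc (-r) r), c/2 ≤ deriv u t := by
      intro t ht
      rw [(hud t (interior_subset ht)).deriv]
      rcases interior_subset ht with ⟨h1, h2⟩
      exact le_of_lt (hmem t s (abs_le.mpr ⟨h1, h2⟩) hsabs).2
    have hrmem : (-r) ∈ Icc (-r) r := ⟨le_refl _, by linarith⟩
    have h0mem : (0:ℝ) ∈ Icc (-r) r := ⟨by linarith, le_of_lt hrpos⟩
    have hrmem' : r ∈ Icc (-r) r := ⟨by linarith, le_refl _⟩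
    have hMVT1 := (convex_Icc (-r) r).mul_sub_le_image_sub_of_le_deriv hcont hdiff hdge
      (-r) hrmem 0 h0mem (by linarith)
    have hMVT2 := (convex_Icc (-r) r).mul_sub_le_image_sub_of_le_deriv hcont hdiff hdge
      0 h0mem r hrmem' (le_of_lt hrpos)
    -- |u 0| < c/2 * r
    have hu0 : |u 0| < c/2 * r := by
      apply hρ₂P ((((0:ℝ):ℂ) + (s:ℂ)*Complex.I)*v, zt)
      · have : ‖((((0:ℝ):ℂ) + (s:ℂ)*Complex.I)*v)‖ = |s| * ‖v‖ := by
          simp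
        rw [this, abs_of_pos hs.1]
        have h1 : s ≤ ρ₂ / ‖v‖ := le_of_lt (lt_of_lt_of_le hs.2 (min_le_right _ _))
        calc s * ‖v‖ ≤ (ρ₂ / ‖v‖) * ‖v‖ :=
              mul_le_mul_of_nonneg_right h1 (norm_nonneg v)
          _ = ρ₂ := by field_simp
      · exact le_of_lt hzt
    have hbnd := abs_lt.mp hu0
    have hneg : u (-r) < 0 := by linarith [hMVT1]
    have hpos : u r > 0 := by linarith [hMVT2]
    have h0mem' : (0:ℝ) ∈ Icc (u (-r)) (u r) := ⟨le_of_lt hneg, le_of_lt hpos⟩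
    obtain ⟨t, ht, hut⟩ := intermediate_value_Icc (by linarith : -r ≤ r) hcont h0mem'
    exact ⟨t, ht, hut⟩
  -- infinitely many zeros of ψ(·, zt) in the closed disc of radius ρ/2
  choose T hT hψT using key
  set Z : Set ℂ := {z₁ | ‖z₁‖ ≤ ρ/2 ∧ ψ (z₁, zt) = 0} with hZdef
  haveI : Infinite (Ioo (0:ℝ) σ) := Set.Ioo.infinite hσpos
  set f : (Ioo (0:ℝ) σ) → ℂ :=
    fun s => (((T s s.2 : ℝ) : ℂ) + ((s : ℝ) : ℂ)*Complex.I)*v with hfdef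
  have hinj : Function.Injective f := by
    intro s₁ s₂ h
    have h2 : ((T s₁ s₁.2 : ℝ) : ℂ) + ((s₁ : ℝ) : ℂ)*Complex.I
        = ((T s₂ s₂.2 : ℝ) : ℂ) + ((s₂ : ℝ) : ℂ)*Complex.I :=
      mul_right_cancel₀ hvne h
    have h3 := congrArg Complex.im h2
    simp at h3
    exact Subtype.ext h3
  have hfmem : ∀ s : (Ioo (0:ℝ) σ), f s ∈ Z := by
    intro s
    constructor
    · apply habs
      · exact abs_le.mpr ⟨(hT s s.2).1, (hT s s.2).2⟩
      · rw [abs_of_pos s.2.1]; exact le_of_lt s.2.2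
    · exact hψT s s.2
  have hZinf : Z.Infinite := Set.infinite_of_injective_forall_mem hinj hfmem
  have hsub : Z ⊆ closedBall (0:ℂ) (ρ/2) := by
    intro z hz
    rw [mem_closedBall_zero_iff]
    simpa using hz.1
  obtain ⟨x, hxK, hacc⟩ :=
    hZinf.exists_accPt_of_subset_isCompact (isCompact_closedBall _ _) hsub
  have hxball : x ∈ ball (0:ℂ) ρ := by
    rw [mem_ball_zero_iff]
    have := mem_closedBall_zero_iff.mp hxK
    linarith
  have hfreq : ∃ᶠ z in nhdsWithin x {x}ᶜ, Φ z = 0 := by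
    rw [accPt_iff_frequently] at hacc
    rw [frequently_nhdsWithin_iff]
    apply hacc.mono
    rintro y ⟨hyx, hyZ⟩
    refine ⟨?_, hyx⟩
    apply hΦ0 y
    · rw [mem_ball_zero_iff]
      exact lt_of_le_of_lt hyZ.1 (by linarith)
    · exact hyZ.2
  have hEq := hΦ.eqOn_zero_of_preconnected_of_frequently_eq_zero
    (convex_ball (0:ℂ) ρ).isPreconnected hxball hfreq
  intro z₁ hz₁
  exact hEq hz₁
end

section
/- Let n ≥ 1 and write points of ℂⁿ as (z₁, z̃) with z₁ ∈ ℂ and z̃ ∈ ℂ^{n−1}. Let ψ be a real-valued real-analytic function on a neighborhood of 0 in ℂⁿ with ψ(0) = 0, and suppose the real Fréchet derivative at 0 of the function z₁ ↦ ψ(z₁, 0) is nonzero (equivalently, ∂ψ/∂z₁(0) ≠ 0, since ψ is real-valued). Then there exist an open neighborhood V of 0 in ℂⁿ, an open neighborhood B of 0 in ℂ × ℂ^{n−1} × ℂ^{n−1}, and a holomorphic function ρ : B → ℂ such that for every z = (z₁, z̃) ∈ V with (conj z₁, z̃, conj z̃) ∈ B, one has ψ(z₁, z̃) = 0 if and only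 if z₁ = ρ(conj z₁, z̃, conj z̃). -/
open Complex ContinuousLinearMap
open scoped NNReal ENNReal

namespace HGR

abbrev E (m : ℕ) := ℂ × (Fin m → ℂ)
abbrev U (m : ℕ) := ℂ × (Fin m → ℂ) × (Fin m → ℂ)
abbrev X (m : ℕ) := ℂ × U m
abbrev Idx (m : ℕ) := Bool ⊕ (Fin m × Bool)

noncomputable def ev (m : ℕ) : Idx m → E m
  | .inl false => (1, 0)
  | .inl true => (Complex.I, 0)
  | .inr (j, false) => (0, Pi.single j 1)
  | .inr (j, true) => (0, Pi.single j Complex.I)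

def cr (m : ℕ) : Idx m → E m → ℝ
  | .inl false, z => z.1.re
  | .inl true, z => z.1.im
  | .inr (j, false), z => (z.2 j).re
  | .inr (j, true), z => (z.2 j).im

noncomputable def A1 (m : ℕ) : X m →L[ℂ] ℂ := ContinuousLinearMap.fst ℂ ℂ (U m)
noncomputable def B1 (m : ℕ) : X m →L[ℂ] ℂ :=
  (ContinuousLinearMap.fst ℂ ℂ ((Fin m → ℂ) × (Fin m → ℂ))).comp (ContinuousLinearMap.snd ℂ ℂ (U m))
noncomputable def Zt (m : ℕ) (j : Fin m) : X m →L[ℂ] ℂ :=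
  (ContinuousLinearMap.proj j).comp
    ((ContinuousLinearMap.fst ℂ (Fin m → ℂ) (Fin m → ℂ)).comp
      ((ContinuousLinearMap.snd ℂ ℂ ((Fin m → ℂ) × (Fin m → ℂ))).comp
        (ContinuousLinearMap.snd ℂ ℂ (U m))))
noncomputable def Wt (m : ℕ) (j : Fin m) : X m →L[ℂ] ℂ :=
  (ContinuousLinearMap.proj j).comp
    ((ContinuousLinearMap.snd ℂ (Fin m → ℂ) (Fin m → ℂ)).comp
      ((ContinuousLinearMap.snd ℂ ℂ ((Fin m → ℂ) × (Fin m → ℂ))).comp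
        (ContinuousLinearMap.snd ℂ ℂ (U m))))

noncomputable def chat (m : ℕ) : Idx m → (X m →L[ℂ] ℂ)
  | .inl false => (2⁻¹ : ℂ) • (A1 m + B1 m)
  | .inl true => (2 * Complex.I)⁻¹ • (A1 m - B1 m)
  | .inr (j, false) => (2⁻¹ : ℂ) • (Zt m j + Wt m j)
  | .inr (j, true) => (2 * Complex.I)⁻¹ • (Zt m j - Wt m j)

def Jmap (m : ℕ) : E m → X m :=
  fun z => (z.1, (starRingEnd ℂ z.1, z.2, fun j => starRingEnd ℂ (z.2 j)))

@[simp] lemma A1_apply (m : ℕ) (x : X m) : A1 m x = x.1 := rfl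
@[simp] lemma B1_apply (m : ℕ) (x : X m) : B1 m x = x.2.1 := rfl
@[simp] lemma Zt_apply (m : ℕ) (j : Fin m) (x : X m) : Zt m j x = x.2.2.1 j := rfl
@[simp] lemma Wt_apply (m : ℕ) (j : Fin m) (x : X m) : Wt m j x = x.2.2.2 j := rfl

lemma Jmap_zero (m : ℕ) : Jmap m 0 = 0 := by
  simp only [Jmap, Prod.ext_iff]
  refine ⟨rfl, by simp, rfl, funext fun j => by simp⟩

lemma Jmap_continuous (m : ℕ) : Continuous (Jmap m) := by
  have hc : Continuous (starRingEnd ℂ) := continuous_star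
  exact continuous_fst.prodMk ((hc.comp continuous_fst).prodMk
    (continuous_snd.prodMk (continuous_pi fun j => hc.comp ((continuous_apply j).comp continuous_snd))))

lemma chat_J (m : ℕ) (i : Idx m) (z : E m) : chat m i (Jmap m z) = ((cr m i z : ℝ) : ℂ) := by
  have h2I : (2 * Complex.I) ≠ 0 := by simp [Complex.I_ne_zero]
  rcases i with b | ⟨j, b⟩ <;> cases b
  · simp only [chat, Jmap, cr, ContinuousLinearMap.smul_apply, ContinuousLinearMap.add_apply,
      A1_apply, B1_apply, smul_eq_mul]
    rw [Complex.add_conj]; push_cast; ring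
  · simp only [chat, Jmap, cr, ContinuousLinearMap.smul_apply, ContinuousLinearMap.sub_apply,
      A1_apply, B1_apply, smul_eq_mul]
    rw [Complex.sub_conj]
    field_simp
    ring_nf
    push_cast
    ring
  · simp only [chat, Jmap, cr, ContinuousLinearMap.smul_apply, ContinuousLinearMap.add_apply,
      Zt_apply, Wt_apply, smul_eq_mul]
    rw [Complex.add_conj]; push_cast; ring
  · simp only [chat, Jmap, cr, ContinuousLinearMap.smul_apply, ContinuousLinearMap.sub_apply,
      Zt_apply, Wt_apply, smul_eq_mul]
    rw [Complex.sub_conj]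
    field_simp
    ring_nf
    push_cast
    ring

lemma chat_bound (m : ℕ) (i : Idx m) (x : X m) : ‖chat m i x‖ ≤ ‖x‖ := by
  have h1 : ‖x.1‖ ≤ ‖x‖ := norm_fst_le x
  have h2 : ‖x.2.1‖ ≤ ‖x‖ := (norm_fst_le x.2).trans (norm_snd_le x)
  have h3 : ∀ j, ‖x.2.2.1 j‖ ≤ ‖x‖ := fun j =>
    ((norm_le_pi_norm x.2.2.1 j).trans ((norm_fst_le x.2.2).trans
      ((norm_snd_le x.2).trans (norm_snd_le x))))
  have h4 : ∀ j, ‖x.2.2.2 j‖ ≤ ‖x‖ := fun j =>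
    ((norm_le_pi_norm x.2.2.2 j).trans ((norm_snd_le x.2.2).trans
      ((norm_snd_le x.2).trans (norm_snd_le x))))
  have hI : ‖(2 * Complex.I)⁻¹‖ = 2⁻¹ := by simp [norm_inv]
  rcases i with b | ⟨j, b⟩ <;> cases b <;>
    simp only [chat, ContinuousLinearMap.smul_apply, ContinuousLinearMap.add_apply,
      ContinuousLinearMap.sub_apply, A1_apply, B1_apply, Zt_apply, Wt_apply, norm_smul, hI,
      norm_inv, Complex.norm_ofNat]
  · have h := (norm_add_le x.1 x.2.1).trans (add_le_add h1 h2); linarith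
  · have h := (norm_sub_le x.1 x.2.1).trans (add_le_add h1 h2); linarith
  · have h := (norm_add_le (x.2.2.1 j) (x.2.2.2 j)).trans (add_le_add (h3 j) (h4 j)); linarith
  · have h := (norm_sub_le (x.2.2.1 j) (x.2.2.2 j)).trans (add_le_add (h3 j) (h4 j)); linarith

lemma ev_bound (m : ℕ) (i : Idx m) : ‖ev m i‖ ≤ 1 := by
  rcases i with b | ⟨j, b⟩ <;> cases b <;>
    simp [ev, Prod.norm_def, Pi.norm_single, Complex.norm_I]

lemma sum_cr_smul_ev (m : ℕ) (z : E m) : ∑ i, cr m i z • ev m i = z := by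
  rw [Fintype.sum_sum_type, Fintype.sum_bool, Fintype.sum_prod_type]
  simp only [Fintype.sum_bool]
  apply Prod.ext
  · simp [ev, cr, Complex.real_smul, Prod.fst_sum]
    linear_combination Complex.re_add_im z.1
  · simp only [Prod.snd_add, Prod.snd_sum]
    simp only [ev, cr, Prod.smul_mk, smul_zero, Prod.snd_add]
    have hsingle : ∀ j : Fin m, ((z.2 j).im • (Pi.single j Complex.I : Fin m → ℂ)
          + (z.2 j).re • (Pi.single j (1:ℂ) : Fin m → ℂ))
        = Pi.single j (z.2 j) := by
      intro j
      rw [← Pi.single_smul, ← Pi.single_smul, ← Pi.single_add]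
      exact congrArg _ (by
        simp only [Complex.real_smul, smul_eq_mul]
        linear_combination Complex.re_add_im (z.2 j))
    simp only [hsingle]
    simpa using (Finset.univ_sum_single z.2)

noncomputable def qser (m : ℕ) (p : FormalMultilinearSeries ℝ (E m) ℝ) :
    FormalMultilinearSeries ℂ (X m) ℂ :=
  fun k => ∑ f : Fin k → Idx m, (((p k fun j => ev m (f j)) : ℝ) : ℂ) •
    (ContinuousMultilinearMap.mkPiAlgebra ℂ (Fin k) ℂ).compContinuousLinearMap
      (fun j => chat m (f j))

lemma qser_apply (m : ℕ) (p : FormalMultilinearSeries ℝ (E m) ℝ) (k : ℕ) (v : Fin k → X m) :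
    qser m p k v = ∑ f : Fin k → Idx m,
      (((p k fun j => ev m (f j)) : ℝ) : ℂ) * ∏ j, chat m (f j) (v j) := by
  simp [qser, ContinuousMultilinearMap.sum_apply, smul_eq_mul]

lemma qser_diag (m : ℕ) (p : FormalMultilinearSeries ℝ (E m) ℝ) (k : ℕ) (z : E m) :
    qser m p k (fun _ => Jmap m z) = (((p k fun _ => z) : ℝ) : ℂ) := by
  rw [qser_apply]
  have hz : (p k fun _ => z) = ∑ f : Fin k → Idx m,
      (∏ j, cr m (f j) z) • (p k fun j => ev m (f j)) := by
    calc (p k fun _ : Fin k => z)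
        = (p k).toMultilinearMap (fun _ : Fin k => ∑ i, cr m i z • ev m i) := by
          rw [show (fun _ : Fin k => z) = fun _ : Fin k => ∑ i, cr m i z • ev m i from
            funext fun _ => (sum_cr_smul_ev m z).symm]
          rfl
      _ = ∑ f : Fin k → Idx m,
            (p k).toMultilinearMap (fun j => cr m (f j) z • ev m (f j)) :=
          (p k).toMultilinearMap.map_sum (fun _ i => cr m i z • ev m i)
      _ = ∑ f : Fin k → Idx m, (∏ j, cr m (f j) z) • (p k fun j => ev m (f j)) :=
          Finset.sum_congr rfl fun f _ =>
            (p k).toMultilinearMap.map_smul_univ (fun j => cr m (f j) z) (fun j => ev m (f j))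
  rw [hz]
  push_cast
  refine Finset.sum_congr rfl fun f _ => ?_
  simp only [chat_J]
  rw [smul_eq_mul]
  push_cast
  ring

lemma qser_norm_le (m : ℕ) (p : FormalMultilinearSeries ℝ (E m) ℝ) (k : ℕ) :
    ‖qser m p k‖ ≤ (Fintype.card (Idx m) : ℝ) ^ k * ‖p k‖ := by
  have hcard : 0 ≤ (Fintype.card (Idx m) : ℝ) ^ k * ‖p k‖ :=
    mul_nonneg (pow_nonneg (by positivity) _) (norm_nonneg _)
  refine ContinuousMultilinearMap.opNorm_le_bound hcard fun v => ?_
  rw [qser_apply]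
  have hterm : ∀ f : Fin k → Idx m,
      ‖(((p k fun j => ev m (f j)) : ℝ) : ℂ) * ∏ j, chat m (f j) (v j)‖
        ≤ ‖p k‖ * ∏ j, ‖v j‖ := by
    intro f
    rw [norm_mul, Complex.norm_real]
    have h1 : ‖p k fun j => ev m (f j)‖ ≤ ‖p k‖ := by
      have := (p k).le_opNorm fun j => ev m (f j)
      refine this.trans ?_
      have hprod : (∏ j, ‖ev m (f j)‖) ≤ 1 :=
        Finset.prod_le_one (fun j _ => norm_nonneg _) (fun j _ => ev_bound m (f j))
      calc ‖p k‖ * ∏ j, ‖ev m (f j)‖ ≤ ‖p k‖ * 1 := by gcongr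
        _ = ‖p k‖ := mul_one _
    have h2 : ‖∏ j, chat m (f j) (v j)‖ ≤ ∏ j, ‖v j‖ := by
      rw [norm_prod]
      exact Finset.prod_le_prod (fun j _ => norm_nonneg _) (fun j _ => chat_bound m (f j) (v j))
    exact mul_le_mul h1 h2 (norm_nonneg _) (norm_nonneg _)
  calc ‖∑ f : Fin k → Idx m, (((p k fun j => ev m (f j)) : ℝ) : ℂ) * ∏ j, chat m (f j) (v j)‖
      ≤ ∑ f : Fin k → Idx m, ‖(((p k fun j => ev m (f j)) : ℝ) : ℂ) * ∏ j, chat m (f j) (v j)‖ :=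
        norm_sum_le _ _
    _ ≤ ∑ _f : Fin k → Idx m, ‖p k‖ * ∏ j, ‖v j‖ := Finset.sum_le_sum fun f _ => hterm f
    _ = (Fintype.card (Idx m) : ℝ) ^ k * (‖p k‖ * ∏ j, ‖v j‖) := by
        rw [Finset.sum_const, Finset.card_univ, nsmul_eq_mul]
        congr 1
        rw [Fintype.card_fun]
        push_cast
        simp
    _ = (Fintype.card (Idx m) : ℝ) ^ k * ‖p k‖ * ∏ j, ‖v j‖ := by ring

lemma qser_radius_pos (m : ℕ) (p : FormalMultilinearSeries ℝ (E m) ℝ)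
    (hp : 0 < p.radius) : 0 < (qser m p).radius := by
  obtain ⟨r, hr0, hrlt⟩ := ENNReal.lt_iff_exists_nnreal_btwn.mp hp
  obtain ⟨C, hC0, hbound⟩ := p.norm_mul_pow_le_of_lt_radius hrlt
  set D : ℝ≥0 := (Fintype.card (Idx m) : ℝ≥0)
  have hD0 : 0 < D := by
    simp only [D]
    exact_mod_cast Fintype.card_pos
  have hr0' : 0 < r := ENNReal.coe_pos.mp hr0
  set s : ℝ≥0 := r / D with hs
  have hs0 : 0 < s := div_pos hr0' hD0
  have hsD : (s : ℝ) * (D : ℝ) = (r : ℝ) := by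
    rw [hs]
    push_cast
    field_simp
  have hbnd : ∀ k, ‖qser m p k‖ * (s : ℝ) ^ k ≤ C := by
    intro k
    calc ‖qser m p k‖ * (s : ℝ) ^ k
        ≤ ((Fintype.card (Idx m) : ℝ) ^ k * ‖p k‖) * (s : ℝ) ^ k := by
          gcongr
          exact qser_norm_le m p k
      _ = ‖p k‖ * ((s : ℝ) * (D : ℝ)) ^ k := by
          rw [mul_pow]
          simp only [D]
          push_cast
          ring
      _ = ‖p k‖ * (r : ℝ) ^ k := by rw [hsD]
      _ ≤ C := hbound k
  have := (qser m p).le_radius_of_bound C hbnd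
  exact lt_of_lt_of_le (by exact_mod_cast hs0) this

lemma apply_fin1 {𝕜 A B : Type*} [NontriviallyNormedField 𝕜] [NormedAddCommGroup A]
    [NormedSpace 𝕜 A] [NormedAddCommGroup B] [NormedSpace 𝕜 B]
    (T : ContinuousMultilinearMap 𝕜 (fun _ : Fin 1 => A) B) (v : A) :
    T (Fin.snoc 0 v) = T (fun _ => v) :=
  congrArg T (funext fun j => by
    have hj : j = 0 := Fin.eq_zero j
    subst hj
    simp [Fin.snoc])

theorem aux (m : ℕ) (ψ : E m → ℝ) (hψa : AnalyticAt ℝ ψ 0) (hψ0 : ψ (0, 0) = 0)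
    (ψ' : ℂ →L[ℝ] ℝ) (hψ' : HasFDerivAt (fun z₁ : ℂ => ψ (z₁, 0)) ψ' 0) (hψ'ne : ψ' ≠ 0) :
    ∃ V : Set (E m), IsOpen V ∧ ((0:ℂ), (0 : Fin m → ℂ)) ∈ V ∧
    ∃ B : Set (U m), IsOpen B ∧ ((0:ℂ), (0 : Fin m → ℂ), (0 : Fin m → ℂ)) ∈ B ∧
    ∃ ρ : U m → ℂ, AnalyticOnNhd ℂ ρ B ∧
      ∀ z₁ zt, (z₁, zt) ∈ V →
        (starRingEnd ℂ z₁, zt, fun j => starRingEnd ℂ (zt j)) ∈ B →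
        (ψ (z₁, zt) = 0 ↔ z₁ = ρ (starRingEnd ℂ z₁, zt, fun j => starRingEnd ℂ (zt j))) := by
  obtain ⟨p, hp⟩ := hψa
  obtain ⟨rp, hpb⟩ := hp
  set q := qser m p with hqdef
  have hqr : 0 < q.radius := qser_radius_pos m p (lt_of_lt_of_le hpb.r_pos hpb.r_le)
  set Ψ : X m → ℂ := q.sum with hΨdef
  have hqball : HasFPowerSeriesOnBall Ψ q 0 q.radius := q.hasFPowerSeriesOnBall hqr
  -- diagonal identity
  have hdiag : ∀ z : E m, z ∈ Metric.eball (0 : E m) rp →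
      Jmap m z ∈ Metric.eball (0 : X m) q.radius → Ψ (Jmap m z) = ((ψ z : ℝ) : ℂ) := by
    intro z hz hJz
    have hs1 : HasSum (fun k => p k fun _ => z) (ψ z) := by
      have := hpb.hasSum (by simpa using hz)
      simpa using this
    have hs2 : HasSum (fun k => q k fun _ => Jmap m z) (Ψ (Jmap m z)) := by
      have := hqball.hasSum (by simpa using hJz)
      simpa using this
    have hs1' : HasSum (fun k => (((p k fun _ => z) : ℝ) : ℂ)) ((ψ z : ℝ) : ℂ) :=
      hs1.mapL Complex.ofRealCLM
    have hs3 : HasSum (fun k => q k fun _ => Jmap m z) ((ψ z : ℝ) : ℂ) := by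
      have hfe : (fun k => q k fun _ => Jmap m z)
          = fun k => (((p k fun _ => z) : ℝ) : ℂ) := funext fun k => qser_diag m p k z
      rw [hfe]
      exact hs1'
    exact hs2.unique hs3
  have hΨ0 : Ψ 0 = 0 := by
    have h0 := hdiag 0 (Metric.mem_eball_self hpb.r_pos)
      (by rw [Jmap_zero]; exact Metric.mem_eball_self hqr)
    rw [Jmap_zero] at h0
    rw [h0]
    exact_mod_cast hψ0
  -- derivative of Ψ
  set L : X m →L[ℂ] ℂ := continuousMultilinearCurryFin1 ℂ (X m) ℂ (q 1) with hLdef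
  have hΨd : HasFDerivAt Ψ L 0 := hqball.hasFPowerSeriesAt.hasFDerivAt
  have hψ'p : ∀ c : ℂ, ψ' c = p 1 (fun _ => ((c, 0) : E m)) := by
    intro c
    have hDψ : HasFDerivAt ψ (continuousMultilinearCurryFin1 ℝ (E m) ℝ (p 1)) 0 :=
      hpb.hasFPowerSeriesAt.hasFDerivAt
    have hinc : HasFDerivAt (fun c : ℂ => ((c, 0) : E m))
        (ContinuousLinearMap.inl ℝ ℂ (Fin m → ℂ)) 0 :=
      (ContinuousLinearMap.inl ℝ ℂ (Fin m → ℂ)).hasFDerivAt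
    have hcomp := (hDψ.comp (0:ℂ) hinc : HasFDerivAt (fun c : ℂ => ψ (c, 0)) _ 0)
    have huniq := hψ'.unique hcomp
    rw [huniq]
    simp only [ContinuousLinearMap.comp_apply, ContinuousLinearMap.inl_apply,
      continuousMultilinearCurryFin1_apply]
    exact apply_fin1 _ _
  have hsum1 : ∀ v : X m, q 1 (fun _ => v)
      = ∑ i : Idx m, (((p 1 fun _ => ev m i) : ℝ) : ℂ) * chat m i v := by
    intro v
    rw [hqdef, qser_apply]
    refine Fintype.sum_equiv (Equiv.funUnique (Fin 1) (Idx m)) _ _ fun f => ?_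
    have h1 : (fun j : Fin 1 => ev m (f j)) = fun _ : Fin 1 => ev m (f 0) :=
      funext fun j => by rw [Subsingleton.elim j 0]
    rw [Fin.prod_univ_one, h1]
    rfl
  set lam : ℂ := ((ψ' 1 : ℝ) : ℂ) * 2⁻¹ + ((ψ' Complex.I : ℝ) : ℂ) * (2 * Complex.I)⁻¹ with hlam
  have hLval : L ((1:ℂ), (0 : U m)) = lam := by
    rw [hLdef]
    simp only [continuousMultilinearCurryFin1_apply]
    rw [apply_fin1, hsum1]
    rw [Fintype.sum_sum_type, Fintype.sum_bool, Fintype.sum_prod_type]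
    simp only [Fintype.sum_bool]
    simp only [chat, ev, ContinuousLinearMap.smul_apply, ContinuousLinearMap.add_apply,
      ContinuousLinearMap.sub_apply, A1_apply, B1_apply, Zt_apply, Wt_apply, smul_eq_mul]
    rw [hlam, ← hψ'p 1, ← hψ'p Complex.I]
    simp
    ring
  have hlamne : lam ≠ 0 := by
    intro hl
    have hI : Complex.I ≠ 0 := Complex.I_ne_zero
    have hexp : ((ψ' 1 : ℝ) : ℂ) * Complex.I + ((ψ' Complex.I : ℝ) : ℂ) = 0 := by
      have h2 := congrArg (fun w => w * (2 * Complex.I)) hl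
      simp only [hlam, zero_mul] at h2
      rw [← h2]
      field_simp
    have hre := congrArg Complex.re hexp
    have him := congrArg Complex.im hexp
    simp [Complex.add_re, Complex.add_im, Complex.mul_re, Complex.mul_im] at hre him
    apply hψ'ne
    apply ContinuousLinearMap.ext
    intro c
    have hc : (c : ℂ) = c.re • (1:ℂ) + c.im • Complex.I := by
      simp only [Complex.real_smul, mul_one]
      exact (Complex.re_add_im c).symm
    rw [hc, map_add, map_smul, map_smul]
    rw [him, hre]
    simp
  have hLdecomp : ∀ (c : ℂ) (u : U m), L ((c, u) : X m) = c * lam + L (((0 : ℂ), u) : X m) := by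
    intro c u
    have hx : ((c, u) : X m) = c • (((1:ℂ), (0:U m)) : X m) + (((0:ℂ), u) : X m) := by
      apply Prod.ext <;> simp
    rw [hx, map_add, map_smul, smul_eq_mul, hLval]
  set Lp : X m →L[ℂ] X m := L.prod (ContinuousLinearMap.snd ℂ ℂ (U m)) with hLp
  set K : X m →L[ℂ] ℂ := ContinuousLinearMap.fst ℂ ℂ (U m) -
      L.comp ((ContinuousLinearMap.inr ℂ ℂ (U m)).comp (ContinuousLinearMap.snd ℂ ℂ (U m))) with hK
  set Li : X m →L[ℂ] X m := (lam⁻¹ • K).prod (ContinuousLinearMap.snd ℂ ℂ (U m)) with hLi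
  have hleft : Function.LeftInverse Li Lp := by
    rintro ⟨c, u⟩
    apply Prod.ext
    · simp only [hLp, hLi, hK, ContinuousLinearMap.prod_apply, ContinuousLinearMap.smul_apply,
        ContinuousLinearMap.sub_apply, ContinuousLinearMap.coe_fst', ContinuousLinearMap.comp_apply,
        ContinuousLinearMap.inr_apply, ContinuousLinearMap.coe_snd', smul_eq_mul]
      rw [hLdecomp]
      field_simp
      ring
    · rfl
  have hright : Function.RightInverse Li Lp := by
    rintro ⟨c, u⟩
    apply Prod.ext
    · simp only [hLp, hLi, hK, ContinuousLinearMap.prod_apply, ContinuousLinearMap.smul_apply,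
        ContinuousLinearMap.sub_apply, ContinuousLinearMap.coe_fst', ContinuousLinearMap.comp_apply,
        ContinuousLinearMap.inr_apply, ContinuousLinearMap.coe_snd', smul_eq_mul]
      rw [hLdecomp]
      field_simp
      ring
    · rfl
  set Φ : X m ≃L[ℂ] X m := ContinuousLinearEquiv.equivOfInverse Lp Li hleft hright with hΦ
  set G : X m → X m := fun x => (Ψ x, x.2) with hG
  have hGA : AnalyticAt ℂ G 0 :=
    (hqball.analyticAt).prod ((ContinuousLinearMap.snd ℂ ℂ (U m)).analyticAt 0)
  have hGd : HasFDerivAt G (Φ : X m →L[ℂ] X m) 0 := hΨd.prodMk hasFDerivAt_snd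
  have hGs : HasStrictFDerivAt G (Φ : X m →L[ℂ] X m) 0 :=
    (hGA.contDiffAt (n := 1)).hasStrictFDerivAt' hGd one_ne_zero
  set PH := hGs.toOpenPartialHomeomorph G with hPH
  have hPHcoe : ⇑PH = G := rfl
  have h0src : (0 : X m) ∈ PH.source := hGs.mem_toOpenPartialHomeomorph_source
  have hG0 : G 0 = 0 := by
    rw [hG]
    exact Prod.ext hΨ0 rfl
  obtain ⟨g, hpg⟩ := hGA
  have hg1 : g 1 = (continuousMultilinearCurryFin1 ℂ (X m) (X m)).symm (Φ : X m →L[ℂ] X m) := by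
    have hd2 : HasFDerivAt G (continuousMultilinearCurryFin1 ℂ (X m) (X m) (g 1)) 0 :=
      hpg.hasFDerivAt
    have huniq := hGd.unique hd2
    rw [huniq]
    exact (LinearIsometryEquiv.symm_apply_apply _ _).symm
  have hsymm : AnalyticAt ℂ (⇑PH.symm) 0 := by
    have hpg' : HasFPowerSeriesAt (⇑PH) g 0 := hpg
    have h := PH.hasFPowerSeriesAt_symm h0src hpg' hg1
    have hPH0 : PH 0 = 0 := hG0
    rw [hPH0] at h
    exact h.analyticAt
  set ρ : U m → ℂ := fun u => (PH.symm (((0:ℂ), u) : X m)).1 with hρ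
  have hρA : AnalyticAt ℂ ρ 0 := by
    have hin : AnalyticAt ℂ (fun u : U m => (((0:ℂ), u) : X m)) 0 :=
      (ContinuousLinearMap.inr ℂ ℂ (U m)).analyticAt 0
    have h1 : AnalyticAt ℂ (fun u : U m => PH.symm (((0:ℂ), u) : X m)) 0 :=
      AnalyticAt.comp_of_eq hsymm hin rfl
    exact AnalyticAt.comp_of_eq
      ((ContinuousLinearMap.fst ℂ ℂ (U m)).analyticAt (PH.symm 0)) h1 rfl
  obtain ⟨s, hs_sub, hs_open, hs0⟩ := mem_nhds_iff.mp hρA.eventually_analyticAt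
  set T : Set (U m) := {u | (((0:ℂ), u) : X m) ∈ PH.target} with hT
  have hTopen : IsOpen T :=
    PH.open_target.preimage (continuous_const.prodMk continuous_id)
  have h0T : (0 : U m) ∈ T := by
    have hmem := PH.map_source h0src
    have hPH0 : PH 0 = 0 := hG0
    rw [hPH0] at hmem
    exact hmem
  refine ⟨Metric.eball (0 : E m) rp ∩ (Jmap m)⁻¹' (Metric.eball (0 : X m) q.radius)
      ∩ (Jmap m)⁻¹' PH.source, ?_, ?_, s ∩ T, hs_open.inter hTopen, ⟨hs0, h0T⟩, ρ, ?_, ?_⟩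
  · exact ((Metric.isOpen_eball).inter
      (Metric.isOpen_eball.preimage (Jmap_continuous m))).inter
      (PH.open_source.preimage (Jmap_continuous m))
  · refine ⟨⟨Metric.mem_eball_self hpb.r_pos, ?_⟩, ?_⟩
    · show Jmap m 0 ∈ Metric.eball (0 : X m) q.radius
      rw [Jmap_zero]
      exact Metric.mem_eball_self hqr
    · show Jmap m 0 ∈ PH.source
      rw [Jmap_zero]
      exact h0src
  · exact fun u hu => hs_sub hu.1
  · rintro z₁ zt ⟨⟨hball, hqballm⟩, hsrc⟩ hB
    set u : U m := (starRingEnd ℂ z₁, zt, fun j => starRingEnd ℂ (zt j)) with hu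
    have hJz : Jmap m (z₁, zt) = ((z₁, u) : X m) := rfl
    have hdz : Ψ ((z₁, u) : X m) = ((ψ (z₁, zt) : ℝ) : ℂ) := by
      have h := hdiag (z₁, zt) hball hqballm
      rwa [hJz] at h
    have htgt : (((0:ℂ), u) : X m) ∈ PH.target := hB.2
    have hsrc' : ((z₁, u) : X m) ∈ PH.source := hsrc
    constructor
    · intro h0
      have hΨz : Ψ ((z₁, u) : X m) = 0 := by rw [hdz]; exact_mod_cast h0
      have hGz : PH ((z₁, u) : X m) = (((0:ℂ), u) : X m) := Prod.ext hΨz rfl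
      have heq := (PH.eq_symm_apply hsrc' htgt).mpr hGz
      exact congrArg Prod.fst heq
    · intro h1
      have hr2 : (PH.symm (((0:ℂ), u) : X m)).2 = u := by
        have hri := PH.right_inv htgt
        exact congrArg Prod.snd hri
      have hP : PH.symm (((0:ℂ), u) : X m) = ((z₁, u) : X m) :=
        Prod.ext h1.symm hr2
      have hGz : PH ((z₁, u) : X m) = (((0:ℂ), u) : X m) := by
        rw [← hP]
        exact PH.right_inv htgt
      have hΨz : Ψ ((z₁, u) : X m) = 0 := congrArg Prod.fst hGz
      rw [hdz] at hΨz
      exact_mod_cast hΨz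

end HGR

/-- Graph representation of a real analytic hypersurface: if `ψ` is real-valued and real
analytic near `0 = (0, 0)` in `ℂⁿ = ℂ × ℂ^{n-1}`, with `ψ(0) = 0` and `z₁ ↦ ψ(z₁, 0)`
having nonzero real derivative at `0`, then near `0` the set `{ψ = 0}` can be written
as the graph `z₁ = ρ(conj z₁, z̃, conj z̃)` for a holomorphic function `ρ`. -/
theorem hypersurface_graph_representation
    {n : ℕ} (hn : 1 ≤ n)
    (W : Set (ℂ × (Fin (n - 1) → ℂ))) (hW : IsOpen W) (h0W : ((0 : ℂ), (0 : Fin (n - 1) → ℂ)) ∈ W)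
    (ψ : ℂ × (Fin (n - 1) → ℂ) → ℝ) (hψ : AnalyticOnNhd ℝ ψ W)
    (hψ0 : ψ (0, 0) = 0)
    (ψ' : ℂ →L[ℝ] ℝ) (hψ' : HasFDerivAt (fun z₁ : ℂ => ψ (z₁, 0)) ψ' 0) (hψ'ne : ψ' ≠ 0) :
    ∃ V : Set (ℂ × (Fin (n - 1) → ℂ)), IsOpen V ∧ ((0 : ℂ), (0 : Fin (n - 1) → ℂ)) ∈ V ∧
    ∃ B : Set (ℂ × (Fin (n - 1) → ℂ) × (Fin (n - 1) → ℂ)), IsOpen B ∧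
      ((0 : ℂ), (0 : Fin (n - 1) → ℂ), (0 : Fin (n - 1) → ℂ)) ∈ B ∧
    ∃ ρ : ℂ × (Fin (n - 1) → ℂ) × (Fin (n - 1) → ℂ) → ℂ, AnalyticOnNhd ℂ ρ B ∧
      ∀ z₁ : ℂ, ∀ zt : Fin (n - 1) → ℂ, (z₁, zt) ∈ V →
        (starRingEnd ℂ z₁, zt, fun j => starRingEnd ℂ (zt j)) ∈ B →
        (ψ (z₁, zt) = 0 ↔ z₁ = ρ (starRingEnd ℂ z₁, zt, fun j => starRingEnd ℂ (zt j))) := by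
  exact HGR.aux (n - 1) ψ (hψ _ h0W) hψ0 ψ' hψ' hψ'ne
end
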